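/- Let m, L be positive integers, let H be a real m×L matrix, let P > 0, and let a ∈ ℝ^L with a ≠ 0. Then the supremum over b ∈ ℝ^m of (1/2)·log₂( P / (‖b‖² + P‖Hᵀb − a‖²) ) is attained and equals −(1/2)·log₂( aᵀ(I_L + P·HᵀH)⁻¹a ). -/

import Mathlib

open Matrix

private lemma dps_nonneg {k : ℕ} (v : Fin k → ℝ) : 0 ≤ v ⬝ᵥ v :=
  Finset.sum_nonneg fun i _ => mul_self_nonneg _

private lemma dps_pos {k : ℕ} {v : Fin k → ℝ} (hv : v ≠ 0) : 0 < v ⬝ᵥ v :=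
  lt_of_le_of_ne (dps_nonneg v) fun h => hv (dotProduct_self_eq_zero.mp h.symm)

/-- For `H ∈ ℝ^{m×L}`, `P > 0` and `a ∈ ℝ^L` nonzero, the supremum over
`b ∈ ℝ^m` of the computation rate `(1/2)·log₂(P/(‖b‖² + P‖Hᵀb − a‖²))` is attained and
equals `−(1/2)·log₂(aᵀ(I_L + P·HᵀH)⁻¹a)`. -/
theorem stmt1 (m L : ℕ) (hm : 0 < m) (hL : 0 < L)
    (H : Matrix (Fin m) (Fin L) ℝ) (P : ℝ) (hP : 0 < P)
    (a : Fin L → ℝ) (ha : a ≠ 0) :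
    let R : (Fin m → ℝ) → ℝ :=
      fun b => (1/2) * Real.logb 2 (P / (b ⬝ᵥ b + P * ((Hᵀ *ᵥ b - a) ⬝ᵥ (Hᵀ *ᵥ b - a))))
    ∃ bstar : Fin m → ℝ, (∀ b : Fin m → ℝ, R b ≤ R bstar) ∧
      R bstar = -((1/2) *
        Real.logb 2 (a ⬝ᵥ (((1 : Matrix (Fin L) (Fin L) ℝ) + P • (Hᵀ * H))⁻¹ *ᵥ a))) := by
  intro R
  set N : Matrix (Fin L) (Fin L) ℝ := (1 : Matrix (Fin L) (Fin L) ℝ) + P • (Hᵀ * H) with hNdef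
  -- N is positive definite, hence invertible
  have hsemi : (P • (Hᵀ * H)).PosSemidef := by
    refine ⟨?_, fun x => ?_⟩
    · unfold Matrix.IsHermitian
      simp [conjTranspose_smul, conjTranspose_mul, Matrix.transpose_transpose]
    · have h0 : (Hᵀ * H).PosSemidef := by
        simpa using posSemidef_conjTranspose_mul_self H
      have := h0.2 x
      convert mul_nonneg hP.le this using 1
      simp only [Finsupp.sum, Finset.mul_sum, Matrix.smul_apply, smul_eq_mul]
      exact Finset.sum_congr rfl fun i _ => Finset.sum_congr rfl fun j _ => by ring
  have hN : N.PosDef := Matrix.PosDef.add_posSemidef Matrix.PosDef.one hsemi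
  have hNunit : IsUnit N := hN.isUnit
  have hNinv : N * N⁻¹ = 1 := Matrix.mul_nonsing_inv N ((Matrix.isUnit_iff_isUnit_det N).mp hNunit)
  set c : Fin L → ℝ := N⁻¹ *ᵥ a with hcdef
  have hNc : N *ᵥ c = a := by
    rw [hcdef, mulVec_mulVec, hNinv, one_mulVec]
  have hc0 : c ≠ 0 := by
    intro h
    apply ha
    rw [← hNc, h, mulVec_zero]
  -- key identity: P • (Hᵀ *ᵥ (H *ᵥ c)) = a - c
  have hkey : P • (Hᵀ *ᵥ (H *ᵥ c)) = a - c := by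
    have : (1 : Matrix (Fin L) (Fin L) ℝ) *ᵥ c + (P • (Hᵀ * H)) *ᵥ c = a := by
      rw [← add_mulVec, ← hNdef, hNc]
    rw [one_mulVec, smul_mulVec, ← mulVec_mulVec] at this
    linear_combination (norm := module) this
  set u : Fin m → ℝ := H *ᵥ c with hudef
  set bstar : Fin m → ℝ := P • u with hbdef
  set q : ℝ := a ⬝ᵥ c with hqdef
  -- scalar facts
  have huu : P * (u ⬝ᵥ u) = c ⬝ᵥ a - c ⬝ᵥ c := by
    have h := congrArg (fun v => c ⬝ᵥ v) hkey
    simp only [dotProduct_smul, dotProduct_sub, smul_eq_mul] at h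
    rw [Matrix.dotProduct_mulVec, vecMul_transpose] at h
    exact h
  -- the quadratic form evaluated at any b
  set f : (Fin m → ℝ) → ℝ := fun b => b ⬝ᵥ b + P * ((Hᵀ *ᵥ b - a) ⬝ᵥ (Hᵀ *ᵥ b - a)) with hfdef
  have hfb : ∀ b : Fin m → ℝ, f b = P * q + (b - bstar) ⬝ᵥ (b - bstar)
      + P * ((Hᵀ *ᵥ (b - bstar)) ⬝ᵥ (Hᵀ *ᵥ (b - bstar))) := by
    intro b
    set d : Fin m → ℝ := b - bstar with hddef
    have hb : b = d + P • u := by rw [hddef, hbdef]; abel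
    have he : Hᵀ *ᵥ b - a = Hᵀ *ᵥ d - c := by
      rw [hb, mulVec_add, mulVec_smul, hkey]; abel
    have hdu : (Hᵀ *ᵥ d) ⬝ᵥ c = d ⬝ᵥ u := by
      rw [Matrix.mulVec_transpose, ← Matrix.dotProduct_mulVec]
    have hca : c ⬝ᵥ a = a ⬝ᵥ c := dotProduct_comm c a
    rw [hfdef]
    show b ⬝ᵥ b + P * ((Hᵀ *ᵥ b - a) ⬝ᵥ (Hᵀ *ᵥ b - a)) = _
    rw [he, show b ⬝ᵥ b = (d + P • u) ⬝ᵥ (d + P • u) from by rw [← hb]]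
    simp only [dotProduct_add, add_dotProduct, dotProduct_sub, sub_dotProduct,
      dotProduct_smul, smul_dotProduct, smul_eq_mul]
    have hdu2 : u ⬝ᵥ d = d ⬝ᵥ u := dotProduct_comm u d
    have hcd : c ⬝ᵥ (Hᵀ *ᵥ d) = (Hᵀ *ᵥ d) ⬝ᵥ c := dotProduct_comm _ _
    simp only [smul_eq_mul, hqdef]
    have h1 : P * (P * (u ⬝ᵥ u)) = P * (c ⬝ᵥ a - c ⬝ᵥ c) := by rw [huu]
    have h2 : P * ((Hᵀ *ᵥ d) ⬝ᵥ c) = P * (d ⬝ᵥ u) := by rw [hdu]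
    have h3 : P * (c ⬝ᵥ (Hᵀ *ᵥ d)) = P * (d ⬝ᵥ u) := by rw [hcd, hdu]
    have h4 : P * (u ⬝ᵥ d) = P * (d ⬝ᵥ u) := by rw [hdu2]
    have h5 : P * (c ⬝ᵥ a) = P * (a ⬝ᵥ c) := by rw [hca]
    linarith
  -- positivity of q
  have hfbstar : f bstar = P * q := by
    have := hfb bstar
    simp only [sub_self, Matrix.mulVec_zero, zero_dotProduct, dotProduct_zero,
      mul_zero, add_zero] at this
    exact this
  have hq : 0 < q := by
    have hcc : 0 < c ⬝ᵥ c := dps_pos hc0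
    have hbb : 0 ≤ bstar ⬝ᵥ bstar := dps_nonneg bstar
    have he : Hᵀ *ᵥ bstar - a = -c := by
      rw [hbdef, mulVec_smul, hkey]; abel
    have h2 : f bstar = bstar ⬝ᵥ bstar + P * ((Hᵀ *ᵥ bstar - a) ⬝ᵥ (Hᵀ *ᵥ bstar - a)) := rfl
    have h3 : f bstar = bstar ⬝ᵥ bstar + P * (c ⬝ᵥ c) := by
      rw [h2, he]; simp [dotProduct_neg, neg_dotProduct]
    have hPq2 : 0 < P * q := by
      rw [← hfbstar, h3]
      nlinarith
    by_contra h
    push_neg at h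
    nlinarith
  have hPq : 0 < P * q := mul_pos hP hq
  refine ⟨bstar, ?_, ?_⟩
  · intro b
    have hfpos : 0 < f b := by
      have := hfb b
      nlinarith [dps_nonneg (b - bstar), dps_nonneg (Hᵀ *ᵥ (b - bstar)),
        mul_nonneg hP.le (dps_nonneg (Hᵀ *ᵥ (b - bstar)))]
    have hfge : P * q ≤ f b := by
      have := hfb b
      nlinarith [dps_nonneg (b - bstar),
        mul_nonneg hP.le (dps_nonneg (Hᵀ *ᵥ (b - bstar)))]
    show (1/2) * Real.logb 2 (P / f b) ≤ (1/2) * Real.logb 2 (P / f bstar)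
    have h1 : P / f b ≤ P / f bstar := by
      rw [hfbstar]
      exact div_le_div_of_nonneg_left hP.le hPq hfge
    have h2 : 0 < P / f b := div_pos hP hfpos
    have := Real.logb_le_logb_of_le (by norm_num : (1:ℝ) < 2) h2 h1
    linarith
  · show (1/2) * Real.logb 2 (P / f bstar) = -((1/2) * Real.logb 2 q)
    rw [hfbstar]
    rw [div_mul_eq_div_div, div_self hP.ne', show (1:ℝ)/q = q⁻¹ from one_div q, Real.logb_inv]
    ring
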